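/- For every real number γ, 1 < G(γ) < 2. -/

import Mathlib

open Real MeasureTheory

/-- Standard normal density `φ(x) = (2π)^(−1/2) exp(−x²/2)`. -/
noncomputable def stdPDF (x : ℝ) : ℝ := (Real.sqrt (2 * Real.pi))⁻¹ * Real.exp (-x ^ 2 / 2)

/-- Standard normal cumulative distribution function `Φ(x) = ∫_{−∞}^x φ(u) du`. -/
noncomputable def stdCDF (x : ℝ) : ℝ := ∫ u in Set.Iic x, stdPDF u

/-- Mills hazard `h(γ) = φ(γ)/(1 − Φ(γ))`. -/
noncomputable def millsHazard (γ : ℝ) : ℝ := stdPDF γ / (1 - stdCDF γ)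

/-- `G(γ) = (1/(h(γ) − γ))·(1/(h(γ) − γ) − γ)` where `h` is the Mills hazard. -/
noncomputable def G (γ : ℝ) : ℝ :=
  (1 / (millsHazard γ - γ)) * (1 / (millsHazard γ - γ) - γ)

open Filter Set Topology

lemma stdPDF_pos (x : ℝ) : 0 < stdPDF x := by
  unfold stdPDF
  have := Real.pi_pos
  positivity

lemma continuous_stdPDF : Continuous stdPDF := by
  unfold stdPDF; fun_prop

lemma stdPDF_eq : stdPDF = fun x => (Real.sqrt (2 * Real.pi))⁻¹ * Real.exp (-(1/2) * x ^ 2) := by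
  funext x; unfold stdPDF; ring_nf

lemma integrable_stdPDF : Integrable stdPDF := by
  rw [stdPDF_eq]
  exact (integrable_exp_neg_mul_sq (by norm_num : (0:ℝ) < 1/2)).const_mul _

lemma integral_stdPDF : ∫ x, stdPDF x = 1 := by
  rw [stdPDF_eq, MeasureTheory.integral_const_mul, integral_gaussian]
  rw [show Real.pi / (1/2) = 2 * Real.pi by ring]
  exact inv_mul_cancel₀ (by positivity)

noncomputable def Sf (x : ℝ) : ℝ := 1 - stdCDF x

lemma Sf_eq (x : ℝ) : Sf x = ∫ u in Set.Ioi x, stdPDF u := by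
  have h := intervalIntegral.integral_Iic_add_Ioi (b := x) (f := stdPDF) (μ := volume)
    integrable_stdPDF.integrableOn integrable_stdPDF.integrableOn
  rw [integral_stdPDF] at h
  unfold Sf stdCDF
  linarith

lemma Sf_pos (x : ℝ) : 0 < Sf x := by
  rw [Sf_eq]
  have h1 : (0:ℝ) < ∫ u in x..(x+1), stdPDF u :=
    intervalIntegral.intervalIntegral_pos_of_pos
      (integrable_stdPDF.intervalIntegrable) (fun u => stdPDF_pos u) (by linarith)
  have h2 : (∫ u in x..(x+1), stdPDF u) ≤ ∫ u in Set.Ioi x, stdPDF u := by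
    rw [intervalIntegral.integral_of_le (by linarith : x ≤ x+1)]
    apply setIntegral_mono_set integrable_stdPDF.integrableOn
    · exact Filter.Eventually.of_forall fun u => (stdPDF_pos u).le
    · exact Filter.Eventually.of_forall (fun u hu => hu.1)
  linarith

lemma hasDerivAt_stdCDF (x : ℝ) : HasDerivAt stdCDF (stdPDF x) x := by
  have key : ∀ y, stdCDF y = stdCDF 0 + ∫ u in (0:ℝ)..y, stdPDF u := by
    intro y
    have h := intervalIntegral.integral_Iic_sub_Iic (f := stdPDF) (μ := volume) (a := 0) (b := y)
      integrable_stdPDF.integrableOn integrable_stdPDF.integrableOn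
    unfold stdCDF
    linarith
  have h := ((continuous_stdPDF.integral_hasStrictDerivAt 0 x).hasDerivAt.const_add (stdCDF 0))
  exact h.congr_of_eventuallyEq (Filter.Eventually.of_forall fun y => key y)

lemma tendsto_stdCDF : Tendsto stdCDF atTop (𝓝 1) := by
  have h := MeasureTheory.tendsto_setIntegral_of_monotone (μ := volume) (f := stdPDF)
    (s := fun r : ℝ => Set.Iic r) (fun r => measurableSet_Iic)
    (fun a b hab => Set.Iic_subset_Iic.2 hab)
    (by rw [Set.iUnion_Iic]; exact integrable_stdPDF.integrableOn)
  rw [Set.iUnion_Iic] at h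
  exact (by simpa [integral_stdPDF] using h : Tendsto (fun i => ∫ x in Iic i, stdPDF x) atTop (𝓝 1))

lemma tendsto_Sf : Tendsto Sf atTop (𝓝 0) := by
  have : Tendsto (fun x : ℝ => 1 - stdCDF x) atTop (𝓝 (1 - 1)) :=
    tendsto_const_nhds.sub tendsto_stdCDF
  exact (by simpa using this : Tendsto (fun x => 1 - stdCDF x) atTop (𝓝 0))

lemma hasDerivAt_Sf (x : ℝ) : HasDerivAt Sf (-stdPDF x) x := by
  exact (hasDerivAt_stdCDF x).const_sub 1

lemma hasDerivAt_stdPDF (x : ℝ) : HasDerivAt stdPDF (-x * stdPDF x) x := by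
  have h1 : HasDerivAt (fun y : ℝ => -y ^ 2 / 2) (-x) x := by
    have := (hasDerivAt_pow 2 x).neg.div_const 2
    refine this.congr_deriv ?_
    norm_num
    ring
  have h2 := h1.exp
  have h3 := h2.const_mul ((Real.sqrt (2 * Real.pi))⁻¹)
  unfold stdPDF
  exact h3.congr_deriv (by ring)

lemma tendsto_stdPDF : Tendsto stdPDF atTop (𝓝 0) := by
  rw [stdPDF_eq]
  rw [show (0:ℝ) = (Real.sqrt (2 * Real.pi))⁻¹ * 0 by ring]
  apply Filter.Tendsto.const_mul
  apply Real.tendsto_exp_atBot.comp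
  have h : Tendsto (fun x : ℝ => (1/2) * x ^ 2) atTop atTop := by
    apply Filter.Tendsto.const_mul_atTop (by norm_num)
    exact tendsto_pow_atTop (by norm_num)
  have h2 := tendsto_neg_atTop_atBot.comp h
  apply h2.congr
  intro x; simp [Function.comp]

lemma hasDerivAt_sqrtq (c : ℝ) (hc : 0 < c) (x : ℝ) :
    HasDerivAt (fun y : ℝ => Real.sqrt (y ^ 2 + c)) (x / Real.sqrt (x ^ 2 + c)) x := by
  have hne : x ^ 2 + c ≠ 0 := by positivity
  have h1 : HasDerivAt (fun y : ℝ => y ^ 2 + c) (2 * x) x := by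
    simpa using (hasDerivAt_pow 2 x).add_const c
  have h2 := (Real.hasDerivAt_sqrt hne).comp x h1
  have hs : 0 < Real.sqrt (x ^ 2 + c) := Real.sqrt_pos.2 (by positivity)
  exact h2.congr_deriv (by field_simp)

lemma sqrtq_pos (c : ℝ) (hc : 0 < c) (x : ℝ) : 0 < Real.sqrt (x ^ 2 + c) :=
  Real.sqrt_pos.2 (by positivity)

lemma sqrtq_sq (c : ℝ) (hc : 0 < c) (x : ℝ) : (Real.sqrt (x ^ 2 + c)) ^ 2 = x ^ 2 + c :=
  Real.sq_sqrt (by positivity)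

lemma lt_sqrtq (c : ℝ) (hc : 0 < c) (x : ℝ) : x < Real.sqrt (x ^ 2 + c) := by
  have h1 := sqrtq_pos c hc x
  have h2 := sqrtq_sq c hc x
  nlinarith

noncomputable def fU (x : ℝ) : ℝ := Sf x - 2 * stdPDF x / (x + Real.sqrt (x ^ 2 + 4))

lemma w_pos (x : ℝ) : 0 < x + Real.sqrt (x ^ 2 + 4) := by
  nlinarith [sqrtq_pos 4 (by norm_num : (0:ℝ) < 4) x, sqrtq_sq 4 (by norm_num : (0:ℝ) < 4) x,
    lt_sqrtq 4 (by norm_num : (0:ℝ) < 4) x]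

lemma hasDerivAt_fU (x : ℝ) :
    HasDerivAt fU (-stdPDF x -
      ((2 * (-x * stdPDF x)) * (x + Real.sqrt (x ^ 2 + 4)) -
        (2 * stdPDF x) * (1 + x / Real.sqrt (x ^ 2 + 4))) / (x + Real.sqrt (x ^ 2 + 4)) ^ 2) x := by
  have hnum : HasDerivAt (fun y : ℝ => 2 * stdPDF y) (2 * (-x * stdPDF x)) x :=
    (hasDerivAt_stdPDF x).const_mul 2
  have hden : HasDerivAt (fun y : ℝ => y + Real.sqrt (y ^ 2 + 4))
      (1 + x / Real.sqrt (x ^ 2 + 4)) x :=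
    (hasDerivAt_id x).add (hasDerivAt_sqrtq 4 (by norm_num) x)
  exact (hasDerivAt_Sf x).sub (hnum.div hden (w_pos x).ne')

lemma fU_deriv_neg (x : ℝ) :
    -stdPDF x -
      ((2 * (-x * stdPDF x)) * (x + Real.sqrt (x ^ 2 + 4)) -
        (2 * stdPDF x) * (1 + x / Real.sqrt (x ^ 2 + 4))) / (x + Real.sqrt (x ^ 2 + 4)) ^ 2 < 0 := by
  set s := Real.sqrt (x ^ 2 + 4) with hs_def
  have hs : 0 < s := sqrtq_pos 4 (by norm_num) x
  have hs2 : s ^ 2 = x ^ 2 + 4 := sqrtq_sq 4 (by norm_num) x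
  have hxs : x < s := lt_sqrtq 4 (by norm_num) x
  have hw : 0 < x + s := w_pos x
  have hφ : 0 < stdPDF x := stdPDF_pos x
  have key : -stdPDF x - ((2 * (-x * stdPDF x)) * (x + s) - (2 * stdPDF x) * (1 + x / s)) / (x + s) ^ 2
      = 2 * stdPDF x * (x - s) / (s * (x + s) ^ 2) := by
    field_simp
    linear_combination (-s) * hs2
  rw [key]
  apply div_neg_of_neg_of_pos
  · nlinarith
  · positivity

lemma strictAnti_fU : StrictAnti fU := by
  apply strictAnti_of_deriv_neg
  intro x
  rw [(hasDerivAt_fU x).deriv]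
  exact fU_deriv_neg x

lemma tendsto_fU : Tendsto fU atTop (𝓝 0) := by
  have h2 : Tendsto (fun x => 2 * stdPDF x / (x + Real.sqrt (x ^ 2 + 4))) atTop (𝓝 0) := by
    apply squeeze_zero' (g := stdPDF)
    · filter_upwards with x
      have h1 := w_pos x
      have h2 := stdPDF_pos x
      positivity
    · filter_upwards [eventually_ge_atTop (1:ℝ)] with x hx
      have hw : 2 ≤ x + Real.sqrt (x ^ 2 + 4) := by
        nlinarith [lt_sqrtq 4 (by norm_num : (0:ℝ) < 4) x, sqrtq_pos 4 (by norm_num : (0:ℝ) < 4) x,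
          sqrtq_sq 4 (by norm_num : (0:ℝ) < 4) x]
      rw [div_le_iff₀ (by linarith)]
      nlinarith [stdPDF_pos x]
    · exact tendsto_stdPDF
  have := tendsto_Sf.sub h2
  exact (by simpa using this : Tendsto (fun x => Sf x - 2 * stdPDF x / (x + Real.sqrt (x ^ 2 + 4))) atTop (𝓝 0))

lemma fU_pos (x : ℝ) : 0 < fU x := by
  have h1 : ∀ y : ℝ, 0 ≤ fU y := by
    intro y
    apply le_of_tendsto tendsto_fU
    filter_upwards [eventually_ge_atTop y] with z hz
    exact (strictAnti_fU.antitone hz)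
  calc 0 ≤ fU (x + 1) := h1 _
    _ < fU x := strictAnti_fU (by linarith)

lemma keyU (x : ℝ) : 2 * stdPDF x < (x + Real.sqrt (x ^ 2 + 4)) * Sf x := by
  have h := fU_pos x
  unfold fU at h
  have hw := w_pos x
  rw [sub_pos, div_lt_iff₀ hw] at h
  linarith [h]

noncomputable def gL (x : ℝ) : ℝ := 4 * stdPDF x / (3 * x + Real.sqrt (x ^ 2 + 8)) - Sf x

lemma v_pos {x : ℝ} (hx : -1 < x) : 0 < 3 * x + Real.sqrt (x ^ 2 + 8) := by
  have ht : 0 < Real.sqrt (x ^ 2 + 8) := sqrtq_pos 8 (by norm_num) x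
  have ht2 : (Real.sqrt (x ^ 2 + 8)) ^ 2 = x ^ 2 + 8 := sqrtq_sq 8 (by norm_num) x
  nlinarith [sq_nonneg (x - 1), sq_nonneg (x + 1)]

lemma cube_lt (x : ℝ) : x ^ 3 + 6 * x < Real.sqrt (x ^ 2 + 8) * (x ^ 2 + 2) := by
  set t := Real.sqrt (x ^ 2 + 8) with ht_def
  have ht : 0 < t := sqrtq_pos 8 (by norm_num) x
  have ht2 : t ^ 2 = x ^ 2 + 8 := sqrtq_sq 8 (by norm_num) x
  rcases le_or_gt x 0 with hx | hx
  · have h1 : x ^ 3 + 6 * x ≤ 0 := by nlinarith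
    nlinarith [mul_pos ht (show (0:ℝ) < x ^ 2 + 2 by positivity)]
  · have hB : 0 < t * (x ^ 2 + 2) + (x ^ 3 + 6 * x) := by
      have := mul_pos ht (show (0:ℝ) < x ^ 2 + 2 by positivity)
      nlinarith
    have h1 : (t * (x ^ 2 + 2) - (x ^ 3 + 6 * x)) * (t * (x ^ 2 + 2) + (x ^ 3 + 6 * x)) = 32 := by
      have : t ^ 2 * (x ^ 2 + 2) ^ 2 = (x ^ 2 + 8) * (x ^ 2 + 2) ^ 2 := by rw [ht2]
      nlinarith [this]
    nlinarith [h1, hB]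

lemma hasDerivAt_gL {x : ℝ} (hx : -1 < x) :
    HasDerivAt gL
      (((4 * (-x * stdPDF x)) * (3 * x + Real.sqrt (x ^ 2 + 8)) -
        (4 * stdPDF x) * (3 + x / Real.sqrt (x ^ 2 + 8))) / (3 * x + Real.sqrt (x ^ 2 + 8)) ^ 2
        - (-stdPDF x)) x := by
  have hnum : HasDerivAt (fun y : ℝ => 4 * stdPDF y) (4 * (-x * stdPDF x)) x :=
    (hasDerivAt_stdPDF x).const_mul 4
  have hden : HasDerivAt (fun y : ℝ => 3 * y + Real.sqrt (y ^ 2 + 8))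
      (3 + x / Real.sqrt (x ^ 2 + 8)) x := by
    have := ((hasDerivAt_id x).const_mul 3).add (hasDerivAt_sqrtq 8 (by norm_num) x)
    simp only [id, mul_one] at this; exact this
  exact (hnum.div hden (v_pos hx).ne').sub (hasDerivAt_Sf x)

lemma gL_deriv_neg {x : ℝ} (hx : -1 < x) :
    ((4 * (-x * stdPDF x)) * (3 * x + Real.sqrt (x ^ 2 + 8)) -
        (4 * stdPDF x) * (3 + x / Real.sqrt (x ^ 2 + 8))) / (3 * x + Real.sqrt (x ^ 2 + 8)) ^ 2
        - (-stdPDF x) < 0 := by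
  set t := Real.sqrt (x ^ 2 + 8) with ht_def
  have ht : 0 < t := sqrtq_pos 8 (by norm_num) x
  have ht2 : t ^ 2 = x ^ 2 + 8 := sqrtq_sq 8 (by norm_num) x
  have hv : 0 < 3 * x + t := v_pos hx
  have hφ : 0 < stdPDF x := stdPDF_pos x
  have key : ((4 * (-x * stdPDF x)) * (3 * x + t) - (4 * stdPDF x) * (3 + x / t)) / (3 * x + t) ^ 2
        - (-stdPDF x)
      = stdPDF x * (2 * (x ^ 3 + 6 * x) - 2 * (t * (x ^ 2 + 2))) / (t * (3 * x + t) ^ 2) := by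
    have hv0 : x * 3 + t ≠ 0 := by linarith
    field_simp
    linear_combination (t + 2 * x) * ht2
  rw [key]
  apply div_neg_of_neg_of_pos
  · nlinarith [cube_lt x]
  · positivity

lemma strictAntiOn_gL : StrictAntiOn gL (Set.Ioi (-1 : ℝ)) := by
  apply strictAntiOn_of_deriv_neg (convex_Ioi _)
  · intro y hy
    exact ((hasDerivAt_gL hy).continuousAt).continuousWithinAt
  · intro y hy
    rw [interior_Ioi] at hy
    rw [(hasDerivAt_gL hy).deriv]
    exact gL_deriv_neg hy

lemma tendsto_gL : Tendsto gL atTop (𝓝 0) := by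
  have h2 : Tendsto (fun x => 4 * stdPDF x / (3 * x + Real.sqrt (x ^ 2 + 8))) atTop (𝓝 0) := by
    apply squeeze_zero' (g := stdPDF)
    · filter_upwards [eventually_gt_atTop (-1:ℝ)] with x hx
      have h1 := v_pos hx
      have h2 := stdPDF_pos x
      positivity
    · filter_upwards [eventually_ge_atTop (1:ℝ)] with x hx
      have hw : 4 ≤ 3 * x + Real.sqrt (x ^ 2 + 8) := by
        nlinarith [sqrtq_pos 8 (by norm_num : (0:ℝ) < 8) x, sqrtq_sq 8 (by norm_num : (0:ℝ) < 8) x]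
      rw [div_le_iff₀ (by linarith)]
      nlinarith [stdPDF_pos x]
    · exact tendsto_stdPDF
  have := h2.sub tendsto_Sf
  exact (by simpa using this : Tendsto (fun x => 4 * stdPDF x / (3 * x + Real.sqrt (x ^ 2 + 8)) - Sf x) atTop (𝓝 0))

lemma gL_pos {x : ℝ} (hx : -1 < x) : 0 < gL x := by
  have h1 : ∀ y : ℝ, -1 < y → 0 ≤ gL y := by
    intro y hy
    apply le_of_tendsto tendsto_gL
    filter_upwards [eventually_ge_atTop y] with z hz
    rcases eq_or_lt_of_le hz with rfl | hz'
    · exact le_rfl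
    · exact (strictAntiOn_gL (Set.mem_Ioi.2 hy) (Set.mem_Ioi.2 (hy.trans hz')) hz').le
  calc 0 ≤ gL (x + 1) := h1 (x + 1) (by linarith)
    _ < gL x := strictAntiOn_gL (Set.mem_Ioi.2 hx) (Set.mem_Ioi.2 (by linarith)) (by linarith)

lemma keyL (x : ℝ) : (3 * x + Real.sqrt (x ^ 2 + 8)) * Sf x < 4 * stdPDF x := by
  set t := Real.sqrt (x ^ 2 + 8) with ht_def
  have ht : 0 < t := sqrtq_pos 8 (by norm_num) x
  have ht2 : t ^ 2 = x ^ 2 + 8 := sqrtq_sq 8 (by norm_num) x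
  rcases le_or_gt x (-1) with hx | hx
  · have hv : 3 * x + t ≤ 0 := by nlinarith [sq_nonneg (x+1), sq_nonneg (x-1)]
    have hS := Sf_pos x
    nlinarith [stdPDF_pos x, mul_nonpos_of_nonpos_of_nonneg hv hS.le]
  · have h := gL_pos hx
    unfold gL at h
    have hv : 0 < 3 * x + t := v_pos hx
    rw [sub_pos, lt_div_iff₀ hv] at h
    linarith

set_option maxHeartbeats 2000000 in
/-- For every real number `γ`, `1 < G(γ) < 2`. -/
theorem one_lt_G_lt_two (γ : ℝ) : 1 < G γ ∧ G γ < 2 := by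
  obtain ⟨φv, hφv⟩ : ∃ p, stdPDF γ = p := ⟨_, rfl⟩
  obtain ⟨S, hSv⟩ : ∃ p, Sf γ = p := ⟨_, rfl⟩
  obtain ⟨s, hsv⟩ : ∃ p, Real.sqrt (γ ^ 2 + 4) = p := ⟨_, rfl⟩
  obtain ⟨t, htv⟩ : ∃ p, Real.sqrt (γ ^ 2 + 8) = p := ⟨_, rfl⟩
  have hS : 0 < S := hSv ▸ Sf_pos γ
  have hφ : 0 < φv := hφv ▸ stdPDF_pos γ
  have hs : 0 < s := hsv ▸ sqrtq_pos 4 (by norm_num) γ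
  have hs2 : s ^ 2 = γ ^ 2 + 4 := by rw [← hsv]; exact sqrtq_sq 4 (by norm_num) γ
  have ht : 0 < t := htv ▸ sqrtq_pos 8 (by norm_num) γ
  have ht2 : t ^ 2 = γ ^ 2 + 8 := by rw [← htv]; exact sqrtq_sq 8 (by norm_num) γ
  have hγs : γ < s := hsv ▸ lt_sqrtq 4 (by norm_num) γ
  have hU : 2 * φv < (γ + s) * S := by
    have := keyU γ; rwa [hφv, hSv, hsv] at this
  have hL : (3 * γ + t) * S < 4 * φv := by
    have := keyL γ; rwa [hφv, hSv, htv] at this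
  -- first key inequality
  have hP : 0 < s * S + γ * S - 2 * φv := by nlinarith
  have hQ : 0 < s * S - γ * S + 2 * φv := by nlinarith [mul_pos (sub_pos.2 hγs) hS]
  have hPQ : (s * S + γ * S - 2 * φv) * (s * S - γ * S + 2 * φv)
      = 4 * (S ^ 2 + γ * φv * S - φv ^ 2) := by
    linear_combination (S ^ 2) * hs2
  have key1 : φv ^ 2 - γ * φv * S - S ^ 2 < 0 := by nlinarith [mul_pos hP hQ, hPQ]
  -- second key inequality
  have hA : t * S < 4 * φv - 3 * γ * S := by nlinarith
  have h2' : (t * S) * (t * S) < (4 * φv - 3 * γ * S) * (4 * φv - 3 * γ * S) :=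
    mul_self_lt_mul_self (mul_pos ht hS).le hA
  have hid2 : (4 * φv - 3 * γ * S) * (4 * φv - 3 * γ * S) - (t * S) * (t * S)
      = 8 * (2 * φv ^ 2 - 3 * γ * φv * S + (γ ^ 2 - 1) * S ^ 2) := by
    linear_combination (-(S ^ 2)) * ht2
  have key2 : 0 < 2 * φv ^ 2 - 3 * γ * φv * S + (γ ^ 2 - 1) * S ^ 2 := by
    nlinarith [h2', hid2]
  -- positivity of the hazard gap
  have hγS : γ * S < φv := by
    rcases le_or_gt γ 0 with hγ | hγ
    · nlinarith [mul_nonpos_of_nonpos_of_nonneg hγ hS.le]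
    · have hw : 0 < γ + s := by linarith
      have h2t : γ + s < 2 * t := by
        nlinarith [sq_nonneg (γ - s), ht, hw, ht2, hs2]
      have hφtS : φv < t * S := by
        nlinarith [mul_lt_mul_of_pos_right h2t hS]
      nlinarith [hφtS]
  -- express the hazard gap
  have hMh : millsHazard γ = φv / S := by
    unfold millsHazard
    rw [show (1 : ℝ) - stdCDF γ = Sf γ from rfl, hSv, hφv]
  have hdd : millsHazard γ - γ = (φv - γ * S) / S := by
    rw [hMh]; field_simp
  obtain ⟨e, hev⟩ : ∃ p, (φv - γ * S) / S = p := ⟨_, rfl⟩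
  have he : 0 < e := hev ▸ div_pos (by linarith) hS
  have hrel : e * S = φv - γ * S := by
    rw [← hev]; field_simp
  have hq1 : e ^ 2 + γ * e - 1 < 0 := by
    have hid : (e ^ 2 + γ * e - 1) * S ^ 2 = φv ^ 2 - γ * φv * S - S ^ 2 := by
      linear_combination (e * S + φv) * hrel
    nlinarith [hid, mul_pos hS hS]
  have hq2 : 0 < 2 * e ^ 2 + γ * e - 1 := by
    have hid : (2 * e ^ 2 + γ * e - 1) * S ^ 2
        = 2 * φv ^ 2 - 3 * γ * φv * S + (γ ^ 2 - 1) * S ^ 2 := by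
      linear_combination (2 * e * S + 2 * φv - γ * S) * hrel
    nlinarith [hid, mul_pos hS hS]
  have hG : G γ = (1 / e) * (1 / e - γ) := by
    unfold G
    rw [hdd, hev]
  rw [hG]
  have hG2 : (1 / e) * (1 / e - γ) = (1 - γ * e) / e ^ 2 := by
    field_simp
  rw [hG2]
  constructor
  · rw [lt_div_iff₀ (by positivity)]
    nlinarith
  · rw [div_lt_iff₀ (by positivity)]
    nlinarith
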